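/- In the Two-component model with α1 = α2 = 1, the copula is C(u,v) = uv/(u + v - uv) for (u,v) ∈ (0,1)^2. -/

import Mathlib

open MeasureTheory ProbabilityTheory Real Set

namespace ProbabilityTheory

/-- CDF of the gamma distribution -/
noncomputable
def gammaCDFReal (a r : ℝ) : StieltjesFunction ℝ :=
  cdf (gammaMeasure a r)

end ProbabilityTheory

lemma integral_exp_neg_mul_Ioi_zero {r : ℝ} (hr : 0 < r) :
    (∫ w in Ioi (0:ℝ), Real.exp (-(r * w))) = 1 / r := by
  have := MeasureTheory.integral_comp_mul_left_Ioi (fun x => Real.exp (-x)) 0 hr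
  simp only [mul_zero] at this
  rw [this, integral_exp_neg_Ioi_zero]
  simp [one_div]

lemma integrable_exp_neg_mul {r : ℝ} (hr : 0 < r) :
    IntegrableOn (fun w : ℝ => Real.exp (-(r * w))) (Ioi 0) := by
  simpa [neg_mul] using exp_neg_integrableOn_Ioi 0 hr

lemma gammaCDFReal_one_one {x : ℝ} (hx : 0 ≤ x) :
    ProbabilityTheory.gammaCDFReal 1 1 x = 1 - Real.exp (-x) := by
  have h : ProbabilityTheory.gammaCDFReal 1 1 x
      = cdf (ProbabilityTheory.expMeasure 1) x := rfl
  rw [h, ProbabilityTheory.cdf_expMeasure_eq zero_lt_one, if_pos hx, one_mul]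

/-- With `α1 = α2 = 1` the Two-component copula is `C(u,v) = uv/(u + v - uv)` on `(0,1)²`. -/
theorem two_component_copula_alpha_one (u v : ℝ) (hu : u ∈ Ioo (0:ℝ) 1)
    (hv : v ∈ Ioo (0:ℝ) 1) :
    u + v - 1 + ∫ w in Ioi (0 : ℝ),
        ProbabilityTheory.gammaCDFReal 1 1 (w / ((1 - u) ^ (-(1 / (1:ℝ))) - 1)) *
          ProbabilityTheory.gammaCDFReal 1 1 (w / ((1 - v) ^ (-(1 / (1:ℝ))) - 1)) *
            Real.exp (-w)
      = u * v / (u + v - u * v) := by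
  obtain ⟨hu0, hu1⟩ := hu
  obtain ⟨hv0, hv1⟩ := hv
  have h1u : (0:ℝ) < 1 - u := by linarith
  have h1v : (0:ℝ) < 1 - v := by linarith
  set c : ℝ := (1 - u) / u with hc
  set d : ℝ := (1 - v) / v with hd
  have hcpos : 0 < c := div_pos h1u hu0
  have hdpos : 0 < d := div_pos h1v hv0
  have hau : (1 - u) ^ (-(1 / (1:ℝ))) - 1 = u / (1 - u) := by
    rw [show -(1 / (1:ℝ)) = -1 by norm_num, Real.rpow_neg_one]
    field_simp
    ring
  have hav : (1 - v) ^ (-(1 / (1:ℝ))) - 1 = v / (1 - v) := by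
    rw [show -(1 / (1:ℝ)) = -1 by norm_num, Real.rpow_neg_one]
    field_simp
    ring
  have hcongr : ∀ w ∈ Ioi (0:ℝ),
      ProbabilityTheory.gammaCDFReal 1 1 (w / ((1 - u) ^ (-(1 / (1:ℝ))) - 1)) *
        ProbabilityTheory.gammaCDFReal 1 1 (w / ((1 - v) ^ (-(1 / (1:ℝ))) - 1)) *
          Real.exp (-w)
      = Real.exp (-(1 * w)) - Real.exp (-((1 + c) * w)) - Real.exp (-((1 + d) * w))
        + Real.exp (-((1 + c + d) * w)) := by
    intro w hw
    rw [mem_Ioi] at hw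
    have hwc : w / (u / (1 - u)) = c * w := by
      rw [hc]; field_simp
    have hwd : w / (v / (1 - v)) = d * w := by
      rw [hd]; field_simp
    rw [hau, hav, hwc, hwd,
      gammaCDFReal_one_one (by positivity),
      gammaCDFReal_one_one (by positivity)]
    rw [show -((1 + c) * w) = -w + -(c * w) by ring,
      show -((1 + d) * w) = -w + -(d * w) by ring,
      show -((1 + c + d) * w) = -w + -(c * w) + -(d * w) by ring,
      show -(1 * w) = -w by ring, Real.exp_add, Real.exp_add, Real.exp_add, Real.exp_add]
    ring
  rw [setIntegral_congr_fun measurableSet_Ioi hcongr]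
  have i1 := integrable_exp_neg_mul (r := 1) one_pos
  have i2 := integrable_exp_neg_mul (r := 1 + c) (by linarith)
  have i3 := integrable_exp_neg_mul (r := 1 + d) (by linarith)
  have i4 := integrable_exp_neg_mul (r := 1 + c + d) (by linarith)
  have i12 : IntegrableOn (fun w : ℝ => Real.exp (-(1 * w)) - Real.exp (-((1 + c) * w))) (Ioi 0) := i1.sub i2
  have i123 : IntegrableOn (fun w : ℝ => Real.exp (-(1 * w)) - Real.exp (-((1 + c) * w)) - Real.exp (-((1 + d) * w))) (Ioi 0) := i12.sub i3
  rw [integral_add i123 i4, integral_sub i12 i3, integral_sub i1 i2,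
    integral_exp_neg_mul_Ioi_zero one_pos,
    integral_exp_neg_mul_Ioi_zero (show (0:ℝ) < 1 + c by linarith),
    integral_exp_neg_mul_Ioi_zero (show (0:ℝ) < 1 + d by linarith),
    integral_exp_neg_mul_Ioi_zero (show (0:ℝ) < 1 + c + d by linarith)]
  have h1c : 1 + c = 1 / u := by rw [hc]; field_simp; ring
  have h1d : 1 + d = 1 / v := by rw [hd]; field_simp; ring
  have hsum : 0 < u + v - u * v := by nlinarith
  have h1cd : 1 + c + d = (u + v - u * v) / (u * v) := by
    rw [hc, hd]; field_simp; ring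
  rw [h1cd, h1c, h1d]
  rw [one_div_one_div, one_div_one_div, one_div_div]
  field_simp
  ring
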